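/- Let s ∈ ℂ and define the quadratic form F = (1−4s²)·f2 + f5, and the map τ : ℂ⁵ → ℂ⁵ by τ(x0,...,x4) = (f4, s·f3, s²·f2, s·f1, f0). Then for every point x = (x0,...,x4) with F(x) = 0, the composite τ(τ(x)) is a scalar multiple of x; more precisely there exists a polynomial λ(x) (a product of quadratic forms vanishing only along the base locus) such that τ(τ(x)) = λ(x)·x modulo the ideal generated by F. Hence τ induces a birational involution of the quadric Q = {F = 0} ⊂ P⁴ that is the identity on Q ∖ C₄. -/
import Mathlib

/-- τ : ℂ⁵ → ℂ⁵, x ↦ (f4, s·f3, s²·f2, s·f1, f0). -/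
noncomputable def tauMap (s : ℂ) (x : Fin 5 → ℂ) : Fin 5 → ℂ :=
  ![ (x 1)^2 - (x 0)*(x 2),
     s * ((x 1)*(x 2) - (x 0)*(x 3)),
     s^2 * ((x 2)^2 - (x 0)*(x 4)),
     s * ((x 2)*(x 3) - (x 1)*(x 4)),
     (x 3)^2 - (x 2)*(x 4) ]

theorem tau_involution (s : ℂ) :
    ∃ lam : (Fin 5 → ℂ) → ℂ,
      ∀ x : Fin 5 → ℂ,
        (1 - 4*s^2) * ((x 2)^2 - (x 0)*(x 4)) + (3*(x 2)^2 - 4*(x 1)*(x 3) + (x 0)*(x 4)) = 0 →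
        tauMap s (tauMap s x) = lam x • x := by
  refine ⟨fun x => s^2 * ((x 0)*(x 3)^2 + (x 1)^2*(x 4) - (x 2)^3 - (x 0)*(x 2)*(x 4))
      + 2*s^4 * ((x 2)^3 - (x 0)*(x 2)*(x 4)), fun x h => ?_⟩
  funext i
  have e2 : (⟨2, by omega⟩ : Fin 5) = 2 := rfl
  have e3 : (⟨3, by omega⟩ : Fin 5) = 3 := rfl
  have e4 : (⟨4, by omega⟩ : Fin 5) = 4 := rfl
  fin_cases i <;>
    simp only [tauMap, Fin.isValue, Fin.mk_zero, Fin.mk_one, e2, e3, e4, Matrix.cons_val_zero,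
      Matrix.cons_val_one, Matrix.head_cons, Matrix.cons_val_two, Matrix.tail_cons,
      Matrix.cons_val_three, Matrix.cons_val_four, Matrix.cons_val_succ, Pi.smul_apply,
      smul_eq_mul]
  · linear_combination ((1:ℂ)/2 * s^2 * (x 0) * (x 2)) * h
  · linear_combination ((1:ℂ)/4 * s^2 * ((x 1)*(x 2) + (x 0)*(x 3))) * h
  · linear_combination ((1:ℂ)/4 * s^2 * ((x 2)^2 + (x 1)*(x 3)) - 1/4 * s^4 * ((x 2)^2 - (x 0)*(x 4))) * h
  · linear_combination ((1:ℂ)/4 * s^2 * ((x 2)*(x 3) + (x 1)*(x 4))) * h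
  · linear_combination ((1:ℂ)/2 * s^2 * (x 2) * (x 4)) * h
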